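/- If ψ : V → ℂ is a function of negative type on a real vector space V, then for every t ≥ 0 the function e^{−tψ} is of positive type; conversely, if ψ(0) ≥ 0 and e^{−tψ} is of positive type for all t ≥ 0, then ψ is of negative type (Schoenberg's theorem). -/

import Mathlib

open scoped ComplexConjugate ComplexOrder

/-- A function φ : V → ℂ on a real vector space is of positive type if
    ∑_{i,j} c_i conj(c_j) φ(ξ_i − ξ_j) ≥ 0 for all finite families. -/
def IsPosType {V : Type*} [AddCommGroup V] [Module ℝ V] (φ : V → ℂ) : Prop :=
  ∀ (N : ℕ) (ξ : Fin N → V) (c : Fin N → ℂ),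
    0 ≤ ∑ i, ∑ j, c i * conj (c j) * φ (ξ i - ξ j)

/-- A function ψ : V → ℂ on a real vector space is of negative type if ψ(0) ≥ 0,
    ψ(−ξ) = conj(ψ(ξ)), and ∑_{i,j} c_i conj(c_j) ψ(ξ_i − ξ_j) ≤ 0 whenever ∑ c_i = 0. -/
def IsNegType {V : Type*} [AddCommGroup V] [Module ℝ V] (ψ : V → ℂ) : Prop :=
  0 ≤ ψ 0 ∧ (∀ ξ, ψ (-ξ) = conj (ψ ξ)) ∧
    ∀ (N : ℕ) (ξ : Fin N → V) (c : Fin N → ℂ), (∑ i, c i) = 0 →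
      (∑ i, ∑ j, c i * conj (c j) * ψ (ξ i - ξ j)) ≤ 0

open scoped Nat Topology

lemma schur_sum {N : ℕ} (A B : Fin N → Fin N → ℂ)
    (hAh : ∀ i j, A j i = conj (A i j))
    (hA : ∀ c : Fin N → ℂ, 0 ≤ ∑ i, ∑ j, c i * conj (c j) * A i j)
    (hB : ∀ c : Fin N → ℂ, 0 ≤ ∑ i, ∑ j, c i * conj (c j) * B i j)
    (c : Fin N → ℂ) :
    0 ≤ ∑ i, ∑ j, c i * conj (c j) * (A i j * B i j) := by
  have hPSD : (Matrix.of A).PosSemidef := by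
    refine Matrix.PosSemidef.of_dotProduct_mulVec_nonneg ?_ ?_
    · rw [Matrix.IsHermitian.ext_iff]
      intro i j
      simp [hAh i j]
    · intro x
      have := hA (star x)
      convert this using 1
      simp only [dotProduct, Matrix.mulVec, Pi.star_apply, Matrix.of_apply,
        dotProduct, Finset.mul_sum]
      refine Finset.sum_congr rfl fun i _ => Finset.sum_congr rfl fun j _ => ?_
      simp [mul_comm, mul_left_comm]
      ring
  open scoped MatrixOrder in
  obtain ⟨M, hM⟩ := CStarAlgebra.nonneg_iff_eq_star_mul_self.mp hPSD.nonneg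
  have hdec : ∀ i j, A i j = ∑ k, conj (M k i) * M k j := by
    intro i j
    have := congrFun (congrFun hM i) j
    simpa [Matrix.mul_apply, Matrix.star_eq_conjTranspose, Matrix.conjTranspose_apply] using this
  have key : ∀ i j, c i * conj (c j) * (A i j * B i j)
      = ∑ k, (c i * conj (M k i)) * conj (c j * conj (M k j)) * B i j := by
    intro i j
    rw [hdec i j, Finset.sum_mul, Finset.mul_sum]
    refine Finset.sum_congr rfl fun k _ => ?_
    simp only [map_mul, RingHom.id_apply, Complex.conj_conj]
    ring
  simp_rw [key]
  rw [show (∑ i, ∑ j, ∑ k, (c i * conj (M k i)) * conj (c j * conj (M k j)) * B i j)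
      = ∑ k : Fin N, ∑ i, ∑ j, (c i * conj (M k i)) * conj (c j * conj (M k j)) * B i j from
    (Finset.sum_congr rfl fun i _ => Finset.sum_comm).trans Finset.sum_comm]
  exact Finset.sum_nonneg fun k _ => hB fun i => c i * conj (M k i)

lemma sum_sq_nonneg {N : ℕ} (c : Fin N → ℂ) : 0 ≤ (∑ i, c i) * conj (∑ i, c i) := by
  rw [Complex.mul_conj]
  exact_mod_cast Complex.normSq_nonneg _

lemma qf_one {N : ℕ} (c : Fin N → ℂ) : 0 ≤ ∑ i, ∑ j, c i * conj (c j) * 1 := by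
  have : (∑ i, ∑ j, c i * conj (c j) * 1) = (∑ i, c i) * conj (∑ i, c i) := by
    rw [map_sum, Finset.sum_mul_sum]
    simp
  rw [this]
  exact sum_sq_nonneg c

lemma qf_pow {N : ℕ} (A : Fin N → Fin N → ℂ)
    (hAh : ∀ i j, A j i = conj (A i j))
    (hA : ∀ c : Fin N → ℂ, 0 ≤ ∑ i, ∑ j, c i * conj (c j) * A i j)
    (n : ℕ) (c : Fin N → ℂ) :
    0 ≤ ∑ i, ∑ j, c i * conj (c j) * (A i j) ^ n := by
  induction n generalizing c with
  | zero => simpa using qf_one c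
  | succ n ih =>
    have hh : ∀ i j, (A j i) ^ n = conj ((A i j) ^ n) := by
      intro i j; rw [hAh i j, map_pow]
    have := schur_sum (fun i j => (A i j) ^ n) A hh ih hA c
    simpa [pow_succ] using this

lemma qf_exp_aux {N : ℕ} (A : Fin N → Fin N → ℂ) (c : Fin N → ℂ) :
    (∑ i, ∑ j, c i * conj (c j) * Complex.exp (A i j))
      = ∑' n : ℕ, ∑ i, ∑ j, c i * conj (c j) * ((A i j) ^ n / n !) := by
  have hsum : ∀ i j : Fin N, Summable (fun n : ℕ => c i * conj (c j) * ((A i j) ^ n / n !)) :=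
    fun i j => (NormedSpace.expSeries_div_summable (A i j)).mul_left _
  rw [Summable.tsum_finsetSum (fun i _ => summable_sum fun j _ => hsum i j)]
  refine Finset.sum_congr rfl fun i _ => ?_
  rw [Summable.tsum_finsetSum fun j _ => hsum i j]
  refine Finset.sum_congr rfl fun j _ => ?_
  rw [Complex.exp_eq_exp_ℂ, NormedSpace.exp_eq_tsum_div, ← tsum_mul_left]

lemma qf_exp {N : ℕ} (A : Fin N → Fin N → ℂ)
    (hAh : ∀ i j, A j i = conj (A i j))
    (hA : ∀ c : Fin N → ℂ, 0 ≤ ∑ i, ∑ j, c i * conj (c j) * A i j)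
    (c : Fin N → ℂ) :
    0 ≤ ∑ i, ∑ j, c i * conj (c j) * Complex.exp (A i j) := by
  rw [qf_exp_aux]
  refine tsum_nonneg fun n => ?_
  have h1 : (∑ i, ∑ j, c i * conj (c j) * ((A i j) ^ n / n !))
      = ((n !:ℂ))⁻¹ * ∑ i, ∑ j, c i * conj (c j) * (A i j) ^ n := by
    rw [Finset.mul_sum]
    refine Finset.sum_congr rfl fun i _ => ?_
    rw [Finset.mul_sum]
    refine Finset.sum_congr rfl fun j _ => ?_
    ring
  rw [h1]
  refine mul_nonneg ?_ (qf_pow A hAh hA n c)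
  rw [show ((n !:ℂ))⁻¹ = (((n !:ℝ))⁻¹ : ℝ) by push_cast; ring, Complex.zero_le_real]
  positivity

lemma qf_expand {N : ℕ} (c f g : Fin N → ℂ) (h : Fin N → Fin N → ℂ) (k : ℂ) :
    ∑ i, ∑ j, c i * conj (c j) * (f i + g j - h i j - k)
      = (∑ i, c i * f i) * (∑ j, conj (c j)) + (∑ i, c i) * (∑ j, conj (c j) * g j)
        - (∑ i, ∑ j, c i * conj (c j) * h i j) - (∑ i, c i) * (∑ j, conj (c j)) * k := by
  have A1 : ∑ i, ∑ j, c i * conj (c j) * f i = (∑ i, c i * f i) * (∑ j, conj (c j)) := by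
    rw [Finset.sum_mul]
    refine Finset.sum_congr rfl fun i _ => ?_
    rw [Finset.mul_sum]
    exact Finset.sum_congr rfl fun j _ => by ring
  have A2 : ∑ i, ∑ j, c i * conj (c j) * g j = (∑ i, c i) * (∑ j, conj (c j) * g j) := by
    rw [Finset.sum_mul]
    refine Finset.sum_congr rfl fun i _ => ?_
    rw [Finset.mul_sum]
    exact Finset.sum_congr rfl fun j _ => by ring
  have A4 : ∑ i, ∑ j, c i * conj (c j) * k = (∑ i, c i) * (∑ j, conj (c j)) * k := by
    rw [Finset.sum_mul_sum, Finset.sum_mul]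
    refine Finset.sum_congr rfl fun i _ => ?_
    rw [Finset.sum_mul]
  calc ∑ i, ∑ j, c i * conj (c j) * (f i + g j - h i j - k)
      = ∑ i, ∑ j, (c i * conj (c j) * f i + c i * conj (c j) * g j
          - c i * conj (c j) * h i j - c i * conj (c j) * k) := by
        refine Finset.sum_congr rfl fun i _ => Finset.sum_congr rfl fun j _ => by ring
    _ = _ := by
        simp only [Finset.sum_sub_distrib, Finset.sum_add_distrib]
        rw [A1, A2, A4]

lemma negType_kernel {V : Type*} [AddCommGroup V] [Module ℝ V] {ψ : V → ℂ}
    (hψ : IsNegType ψ) (N : ℕ) (ξ : Fin N → V) (c : Fin N → ℂ) :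
    0 ≤ ∑ i, ∑ j, c i * conj (c j) * (ψ (ξ i) + conj (ψ (ξ j)) - ψ (ξ i - ξ j) - ψ 0) := by
  obtain ⟨h0, hsym, hneg⟩ := hψ
  set s : ℂ := ∑ i, c i with hs
  have H := hneg (N+1) (Fin.cons 0 ξ) (Fin.cons (-s) c)
    (by rw [Fin.sum_univ_succ]; simp [hs])
  simp only [Fin.sum_univ_succ, Fin.cons_zero, Fin.cons_succ, sub_zero, zero_sub, sub_self,
    hsym, map_neg, Finset.sum_add_distrib] at H
  have e1 : ∑ x, c x * -(conj s) * ψ (ξ x) = -(conj s) * ∑ x, c x * ψ (ξ x) := by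
    rw [Finset.mul_sum]
    exact Finset.sum_congr rfl fun x _ => by ring
  have e2 : ∑ x, -s * conj (c x) * conj (ψ (ξ x)) = -s * ∑ x, conj (c x) * conj (ψ (ξ x)) := by
    rw [Finset.mul_sum]
    exact Finset.sum_congr rfl fun x _ => by ring
  rw [e1, e2] at H
  rw [qf_expand c (fun i => ψ (ξ i)) (fun j => conj (ψ (ξ j))) (fun i j => ψ (ξ i - ξ j)) (ψ 0),
    ← map_sum, ← hs]
  have H' := neg_nonneg.2 H
  exact le_trans H' (le_of_eq (by ring))

lemma schoenberg_forward {V : Type*} [AddCommGroup V] [Module ℝ V] {ψ : V → ℂ}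
    (hψ : IsNegType ψ) {t : ℝ} (ht : 0 ≤ t) :
    IsPosType (fun ξ => Complex.exp (-(t : ℂ) * ψ ξ)) := by
  intro N ξ c
  have h0 := hψ.1
  have hsym := hψ.2.1
  have him : (ψ 0).im = 0 := ((Complex.le_def).mp h0).2.symm
  have hconj0 : conj (ψ 0) = ψ 0 := Complex.conj_eq_iff_im.mpr him
  set A : Fin N → Fin N → ℂ :=
    fun i j => (t : ℂ) * (ψ (ξ i) + conj (ψ (ξ j)) - ψ (ξ i - ξ j) - ψ 0) with hA
  have hAh : ∀ i j, A j i = conj (A i j) := by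
    intro i j
    simp only [hA, map_mul, map_sub, map_add, Complex.conj_ofReal, Complex.conj_conj, hconj0]
    rw [show ξ j - ξ i = -(ξ i - ξ j) by abel, hsym]
    ring
  have hApos : ∀ d : Fin N → ℂ, 0 ≤ ∑ i, ∑ j, d i * conj (d j) * A i j := by
    intro d
    have h1 : (∑ i, ∑ j, d i * conj (d j) * A i j)
        = (t : ℂ) * ∑ i, ∑ j, d i * conj (d j)
            * (ψ (ξ i) + conj (ψ (ξ j)) - ψ (ξ i - ξ j) - ψ 0) := by
      rw [Finset.mul_sum]
      refine Finset.sum_congr rfl fun i _ => ?_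
      rw [Finset.mul_sum]
      exact Finset.sum_congr rfl fun j _ => by simp only [hA]; ring
    rw [h1]
    exact mul_nonneg (by rw [Complex.zero_le_real]; exact ht)
      (negType_kernel hψ N ξ d)
  have hterm : ∀ i j, c i * conj (c j) * Complex.exp (-(t:ℂ) * ψ (ξ i - ξ j))
      = Complex.exp ((t:ℂ) * ψ 0) * ((c i * Complex.exp (-(t:ℂ) * ψ (ξ i)))
          * conj (c j * Complex.exp (-(t:ℂ) * ψ (ξ j))) * Complex.exp (A i j)) := by
    intro i j
    rw [map_mul, ← Complex.exp_conj]
    have hc : conj (-(t:ℂ) * ψ (ξ j)) = -(t:ℂ) * conj (ψ (ξ j)) := by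
      simp [Complex.conj_ofReal]
    rw [hc]
    have expand : Complex.exp ((t:ℂ) * ψ 0) * Complex.exp (-(t:ℂ) * ψ (ξ i))
        * Complex.exp (-(t:ℂ) * conj (ψ (ξ j))) * Complex.exp (A i j)
        = Complex.exp (-(t:ℂ) * ψ (ξ i - ξ j)) := by
      rw [← Complex.exp_add, ← Complex.exp_add, ← Complex.exp_add]
      congr 1
      simp only [hA]
      ring
    rw [← expand]
    ring
  have hsum : (∑ i, ∑ j, c i * conj (c j) * Complex.exp (-(t:ℂ) * ψ (ξ i - ξ j)))
      = Complex.exp ((t:ℂ) * ψ 0) * ∑ i, ∑ j, (c i * Complex.exp (-(t:ℂ) * ψ (ξ i)))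
          * conj (c j * Complex.exp (-(t:ℂ) * ψ (ξ j))) * Complex.exp (A i j) := by
    rw [Finset.mul_sum]
    refine Finset.sum_congr rfl fun i _ => ?_
    rw [Finset.mul_sum]
    exact Finset.sum_congr rfl fun j _ => hterm i j
  simp only []
  rw [hsum]
  refine mul_nonneg ?_ (qf_exp A hAh hApos _)
  have : (t:ℂ) * ψ 0 = ((t * (ψ 0).re : ℝ) : ℂ) := by
    rw [Complex.ext_iff]
    constructor <;> simp [him]
  rw [this, ← Complex.ofReal_exp, Complex.zero_le_real]
  positivity

lemma posType_zero_im {V : Type*} [AddCommGroup V] [Module ℝ V] {f : V → ℂ}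
    (hf : IsPosType f) : (f 0).im = 0 := by
  have H := hf 1 ![0] ![1]
  simp [Fin.sum_univ_one] at H
  exact ((Complex.le_def.mp H).2).symm

lemma posType_neg {V : Type*} [AddCommGroup V] [Module ℝ V] {f : V → ℂ}
    (hf : IsPosType f) (ξ : V) : f (-ξ) = conj (f ξ) := by
  have h0 := posType_zero_im hf
  have key : ∀ z : ℂ, (f 0 + conj z * f (-ξ) + (z * f ξ + z * conj z * f 0)).im = 0 := by
    intro z
    have H := hf 2 ![0, ξ] ![1, z]
    simp only [Fin.sum_univ_two, Matrix.cons_val_zero, Matrix.cons_val_one, Matrix.head_cons,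
      sub_self, sub_zero, zero_sub, map_one, one_mul, mul_one] at H
    exact ((Complex.le_def.mp H).2).symm
  have k1 := key 1
  have k2 := key Complex.I
  simp [Complex.add_im, Complex.mul_im, Complex.ext_iff, h0] at k1 k2 ⊢
  constructor <;> nlinarith [k1, k2]

lemma eq_zero_of_exp_eq_one (a : ℂ)
    (h : ∀ t : ℝ, 0 ≤ t → Complex.exp ((t : ℂ) * a) = 1) : a = 0 := by
  by_contra ha
  set t : ℝ := (‖a‖ + 1)⁻¹ with htdef
  have hA : 0 < ‖a‖ := by
    simpa [norm_pos_iff] using ha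
  have ht : 0 < t := by positivity
  obtain ⟨n, hn⟩ := Complex.exp_eq_one_iff.mp (h t ht.le)
  have hlt : ‖(t : ℂ) * a‖ < 1 := by
    rw [norm_mul, Complex.norm_real, Real.norm_eq_abs, abs_of_pos ht, htdef]
    rw [inv_mul_lt_iff₀ (by positivity), mul_one]
    linarith
  rw [hn] at hlt
  have habs : ‖(n : ℂ) * (2 * Real.pi * Complex.I)‖ = |(n : ℝ)| * (2 * Real.pi) := by
    simp [norm_mul, Complex.norm_real, Complex.norm_I, abs_of_pos Real.pi_pos]
  rw [habs] at hlt
  rcases eq_or_ne n 0 with h0 | h0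
  · rw [h0] at hn
    simp at hn
    rcases hn with h | h
    · exact absurd h (ne_of_gt ht)
    · exact ha h
  · have : (1 : ℝ) ≤ |(n : ℝ)| := by
      rw [← Int.cast_abs]
      exact_mod_cast Int.one_le_abs h0
    nlinarith [Real.pi_gt_three]

lemma tendsto_one_sub_exp (z : ℂ) :
    Filter.Tendsto (fun t : ℝ => (t : ℂ)⁻¹ * (1 - Complex.exp (-(t : ℂ) * z)))
      (𝓝[>] (0:ℝ)) (𝓝 z) := by
  have h1 : HasDerivAt (fun t : ℝ => -(t : ℂ) * z) (-z) 0 := by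
    simpa using ((Complex.ofRealCLM.hasDerivAt (x := (0:ℝ))).neg.mul_const z)
  have h2 : HasDerivAt (fun t : ℝ => Complex.exp (-(t : ℂ) * z)) (-z) 0 := by
    simpa using h1.cexp
  have h3 := hasDerivAt_iff_tendsto_slope.mp h2
  have h4 := h3.neg
  rw [show -(-z) = z from neg_neg z] at h4
  have h5 : Filter.Tendsto (fun t : ℝ => -slope (fun t : ℝ => Complex.exp (-(t : ℂ) * z)) 0 t)
      (𝓝[>] (0:ℝ)) (𝓝 z) :=
    h4.mono_left (nhdsWithin_mono 0 fun x hx => ne_of_gt hx)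
  refine h5.congr fun t => ?_
  simp only [slope_def_module, sub_zero, Complex.ofReal_zero, neg_zero, zero_mul,
    Complex.exp_zero]
  rw [show ((t:ℝ))⁻¹ • (Complex.exp (-(t:ℂ) * z) - 1) = (t:ℂ)⁻¹ * (Complex.exp (-(t:ℂ)*z) - 1) by
    rw [Complex.real_smul, Complex.ofReal_inv]]
  ring

lemma converse_neg {V : Type*} [AddCommGroup V] [Module ℝ V] {ψ : V → ℂ}
    (hpt : ∀ t : ℝ, 0 ≤ t → IsPosType (fun ξ => Complex.exp (-(t : ℂ) * ψ ξ)))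
    (N : ℕ) (ξ : Fin N → V) (c : Fin N → ℂ) (hc : (∑ i, c i) = 0) :
    (∑ i, ∑ j, c i * conj (c j) * ψ (ξ i - ξ j)) ≤ 0 := by
  have htend : Filter.Tendsto
      (fun t : ℝ => ∑ i, ∑ j, c i * conj (c j) * ((t:ℂ)⁻¹ * (1 - Complex.exp (-(t:ℂ) * ψ (ξ i - ξ j)))))
      (𝓝[>] (0:ℝ)) (𝓝 (∑ i, ∑ j, c i * conj (c j) * ψ (ξ i - ξ j))) := by
    refine tendsto_finset_sum _ fun i _ => tendsto_finset_sum _ fun j _ => ?_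
    exact (tendsto_one_sub_exp _).const_mul _
  refine le_of_tendsto htend ?_
  filter_upwards [self_mem_nhdsWithin] with t ht
  replace ht : (0:ℝ) < t := ht
  have hE := hpt t ht.le N ξ c
  simp only [] at hE
  have htc : (0:ℂ) ≤ (t:ℂ)⁻¹ := by
    rw [show ((t:ℂ))⁻¹ = ((t⁻¹ : ℝ) : ℂ) by push_cast; ring, Complex.zero_le_real]
    positivity
  have heq : (∑ i, ∑ j, c i * conj (c j) * ((t:ℂ)⁻¹ * (1 - Complex.exp (-(t:ℂ) * ψ (ξ i - ξ j)))))
      = -((t:ℂ)⁻¹ * ∑ i, ∑ j, c i * conj (c j) * Complex.exp (-(t:ℂ) * ψ (ξ i - ξ j))) := by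
    have e1 : (∑ i, ∑ j, c i * conj (c j) * ((t:ℂ)⁻¹ * (1 - Complex.exp (-(t:ℂ) * ψ (ξ i - ξ j)))))
        = (t:ℂ)⁻¹ * ((∑ i, ∑ j, c i * conj (c j))
            - ∑ i, ∑ j, c i * conj (c j) * Complex.exp (-(t:ℂ) * ψ (ξ i - ξ j))) := by
      symm
      rw [mul_sub, Finset.mul_sum, Finset.mul_sum, ← Finset.sum_sub_distrib]
      refine Finset.sum_congr rfl fun i _ => ?_
      rw [Finset.mul_sum, Finset.mul_sum, ← Finset.sum_sub_distrib]
      refine Finset.sum_congr rfl fun j _ => ?_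
      ring
    have e2 : (∑ i, ∑ j, c i * conj (c j)) = 0 := by
      rw [← Finset.sum_mul_sum, hc, zero_mul]
    rw [e1, e2, zero_sub, mul_neg]
  rw [heq]
  exact neg_nonpos.2 (mul_nonneg htc hE)

/-- Schoenberg's theorem: ψ is of negative type iff ψ(0) ≥ 0 and e^{−tψ} is of
    positive type for every t ≥ 0. -/
theorem schoenberg {V : Type*} [AddCommGroup V] [Module ℝ V] (ψ : V → ℂ) :
    IsNegType ψ ↔
      (0 ≤ ψ 0 ∧ ∀ t : ℝ, 0 ≤ t → IsPosType (fun ξ => Complex.exp (-(t : ℂ) * ψ ξ))) := by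
  constructor
  · intro hψ
    exact ⟨hψ.1, fun t ht => schoenberg_forward hψ ht⟩
  · rintro ⟨h0, hpt⟩
    refine ⟨h0, ?_, fun N ξ c hc => converse_neg hpt N ξ c hc⟩
    intro ξ
    have key : ∀ t : ℝ, 0 ≤ t → Complex.exp ((t:ℂ) * (conj (ψ ξ) - ψ (-ξ))) = 1 := by
      intro t ht
      have h1 := posType_neg (hpt t ht) ξ
      rw [← Complex.exp_conj] at h1
      have h2 : conj (-(t:ℂ) * ψ ξ) = -(t:ℂ) * conj (ψ ξ) := by simp [Complex.conj_ofReal]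
      rw [h2] at h1
      calc Complex.exp ((t:ℂ) * (conj (ψ ξ) - ψ (-ξ)))
          = Complex.exp (-(t:ℂ) * ψ (-ξ)) * Complex.exp ((t:ℂ) * conj (ψ ξ)) := by
            rw [← Complex.exp_add]; congr 1; ring
        _ = Complex.exp (-(t:ℂ) * conj (ψ ξ)) * Complex.exp ((t:ℂ) * conj (ψ ξ)) := by rw [h1]
        _ = 1 := by rw [← Complex.exp_add, show -(t:ℂ) * conj (ψ ξ) + (t:ℂ) * conj (ψ ξ) = 0 by ring, Complex.exp_zero]
    have hz := eq_zero_of_exp_eq_one _ key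
    have := sub_eq_zero.mp hz
    exact this.symm
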